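/- (Robertson–Schrödinger inequalities.) Let ħ > 0 and let Σ be a real symmetric 2n×2n matrix, written in block form with entries Σ_{j,k}, such that the complex Hermitian matrix Σ + (iħ/2)J is positive semidefinite. Then for every j = 1, …, n, writing (Δx_j)² = Σ_{j,j}, (Δp_j)² = Σ_{n+j,n+j}, and Δ(x_j,p_j) = Σ_{j,n+j}, one has (Δx_j)²(Δp_j)² ≥ Δ(x_j,p_j)² + ħ²/4. -/

import Mathlib

open Matrix
open scoped ComplexOrder

noncomputable section

/-- The standard symplectic matrix `J = [[0, I],[-I, 0]]` on `ℝⁿ × ℝⁿ`. -/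
def stdJ (n : ℕ) : Matrix (Fin n ⊕ Fin n) (Fin n ⊕ Fin n) ℝ :=
  Matrix.fromBlocks 0 1 (-1) 0

lemma quad_aux {m : Type*} [Fintype m] [DecidableEq m] (M : Matrix m m ℂ) (i k : m) (c : ℂ) :
    star (c • (Pi.single i 1 : m → ℂ) + Pi.single k 1) ⬝ᵥ
      M *ᵥ (c • (Pi.single i 1 : m → ℂ) + Pi.single k 1)
    = starRingEnd ℂ c * c * M i i + starRingEnd ℂ c * M i k + c * M k i + M k k := by
  simp [dotProduct_add, add_dotProduct, mulVec_add, mulVec_smul, star_add, star_smul,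
    mulVec_single, single_dotProduct, dotProduct_single, ← Pi.single_star, Pi.single_apply]
  ring


/-- Robertson–Schrödinger inequalities: if the symmetric matrix `Σ` satisfies the
quantum condition `Σ + (iℏ/2)J ≥ 0`, then for each `j`,
`(Δx_j)²(Δp_j)² ≥ Δ(x_j,p_j)² + ℏ²/4`, where `(Δx_j)² = Σ_{x_j x_j}`,
`(Δp_j)² = Σ_{p_j p_j}` and `Δ(x_j,p_j) = Σ_{x_j p_j}`. -/
theorem statement19 (n : ℕ) (ℏ : ℝ) (hℏ : 0 < ℏ)
    (Sig : Matrix (Fin n ⊕ Fin n) (Fin n ⊕ Fin n) ℝ) (hSym : Sig.IsSymm)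
    (hQ : (Sig.map Complex.ofReal
        + (Complex.I * (ℏ : ℂ) / 2) • (stdJ n).map Complex.ofReal).PosSemidef) :
    ∀ j : Fin n,
      Sig (Sum.inl j) (Sum.inr j) ^ 2 + ℏ ^ 2 / 4
        ≤ Sig (Sum.inl j) (Sum.inl j) * Sig (Sum.inr j) (Sum.inr j) := by
  intro j
  set M := Sig.map Complex.ofReal
      + (Complex.I * (ℏ : ℂ) / 2) • (stdJ n).map Complex.ofReal with hM
  set a : ℝ := Sig (Sum.inl j) (Sum.inl j)
  set d : ℝ := Sig (Sum.inr j) (Sum.inr j)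
  set s : ℝ := Sig (Sum.inl j) (Sum.inr j)
  set B : ℝ := s ^ 2 + ℏ ^ 2 / 4 with hB
  have hBpos : 0 < B := by positivity
  -- entries of M
  have h11 : M (Sum.inl j) (Sum.inl j) = (a : ℂ) := by
    simp [hM, stdJ, Matrix.fromBlocks_apply₁₁]
    rfl
  have h22 : M (Sum.inr j) (Sum.inr j) = (d : ℂ) := by
    simp [hM, stdJ, Matrix.fromBlocks_apply₂₂]
    rfl
  have h12 : M (Sum.inl j) (Sum.inr j) = (s : ℂ) + Complex.I * (ℏ : ℂ) / 2 := by
    simp [hM, stdJ, Matrix.fromBlocks_apply₁₂, Matrix.one_apply_eq]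
    rfl
  have h21 : M (Sum.inr j) (Sum.inl j) = (s : ℂ) - Complex.I * (ℏ : ℂ) / 2 := by
    have : Sig (Sum.inr j) (Sum.inl j) = s := hSym.apply _ _
    simp [hM, stdJ, Matrix.fromBlocks_apply₂₁, Matrix.one_apply_eq, this]
    ring
  -- the real quadratic inequality
  have key : ∀ t : ℝ, 0 ≤ a * B * (t * t) + 2 * B * t + d := by
    intro t
    set b : ℂ := (s : ℂ) + Complex.I * (ℏ : ℂ) / 2 with hb
    have hq := hQ.dotProduct_mulVec_nonneg (((t : ℂ) * b) • (Pi.single (Sum.inl j) 1 : Fin n ⊕ Fin n → ℂ)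
        + Pi.single (Sum.inr j) 1)
    rw [quad_aux] at hq
    have heq : starRingEnd ℂ ((t : ℂ) * b) * ((t : ℂ) * b) * M (Sum.inl j) (Sum.inl j)
        + starRingEnd ℂ ((t : ℂ) * b) * M (Sum.inl j) (Sum.inr j)
        + (t : ℂ) * b * M (Sum.inr j) (Sum.inl j)
        + M (Sum.inr j) (Sum.inr j)
        = ((a * B * (t * t) + 2 * B * t + d : ℝ) : ℂ) := by
      rw [h11, h22, h12, h21, hb]
      simp [Complex.ext_iff, _root_.map_mul]
      constructor <;> ring_nf <;> simp [Complex.I_sq] <;> ring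
    rw [heq] at hq
    exact_mod_cast hq
  -- discriminant
  have hd := discrim_le_zero key
  rw [discrim] at hd
  have h1 : B ^ 2 ≤ a * d * B := by nlinarith
  have := (mul_le_mul_iff_of_pos_right hBpos).mp (by nlinarith : B * B ≤ (a * d) * B)
  calc s ^ 2 + ℏ ^ 2 / 4 = B := rfl
    _ ≤ a * d := this
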